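/- Let z_1,...,z_r be distinct complex numbers with |z_j| ≤ 1 and Δ := min_{j≠k} |z_j - z_k|. Then the Frobenius norm of the inverse Vandermonde matrix satisfies ‖V^{-1}‖_F ≤ sqrt(r · C(2(r-1), r-1)) / Δ^{r-1}, and hence the operator norm ‖V^{-1}‖ obeys the same bound. -/

import Mathlib

open Matrix Polynomial Finset

/-- The spectral (operator) norm of a square complex matrix. -/
noncomputable def opNorm {n : ℕ} (M : Matrix (Fin n) (Fin n) ℂ) : ℝ :=
  ‖Matrix.toEuclideanCLM (𝕜 := ℂ) M‖

/-- The Frobenius norm of a square complex matrix. -/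
noncomputable def frobNorm {n : ℕ} (M : Matrix (Fin n) (Fin n) ℂ) : ℝ :=
  Real.sqrt (∑ j, ∑ k, ‖M j k‖ ^ 2)


lemma sum_choose_sq (n : ℕ) :
    ∑ i ∈ Finset.range (n + 1), (n.choose i) ^ 2 = (2 * n).choose n := by
  rw [two_mul, Nat.add_choose_eq, Finset.Nat.sum_antidiagonal_eq_sum_range_succ_mk]
  exact Finset.sum_congr rfl fun i hi => by
    rw [Nat.choose_symm (Nat.lt_succ_iff.mp (Finset.mem_range.mp hi)), sq]

lemma sum_choose_sq_real (n : ℕ) :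
    ∑ i ∈ Finset.range (n + 1), ((n.choose i : ℝ)) ^ 2 = ((2 * n).choose n : ℝ) := by
  exact_mod_cast congrArg (Nat.cast : ℕ → ℝ) (sum_choose_sq n)

lemma opNorm_le_frobNorm {n : ℕ} (M : Matrix (Fin n) (Fin n) ℂ) : opNorm M ≤ frobNorm M := by
  refine ContinuousLinearMap.opNorm_le_bound _ (Real.sqrt_nonneg _) fun x => ?_
  have hx : ∀ i, (Matrix.toEuclideanCLM (𝕜 := ℂ) M x) i = ∑ j, M i j * x j := by
    intro i
    have h := Matrix.ofLp_toEuclideanCLM (𝕜 := ℂ) M x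
    have := congrFun h i
    simpa [Matrix.mulVec, dotProduct] using this
  have key : ∀ i, ‖∑ j, M i j * x j‖ ^ 2 ≤ (∑ j, ‖M i j‖ ^ 2) * (∑ j, ‖x j‖ ^ 2) := by
    intro i
    have h1 : ‖∑ j, M i j * x j‖ ≤ ∑ j, ‖M i j‖ * ‖x j‖ :=
      (norm_sum_le _ _).trans_eq (Finset.sum_congr rfl fun j _ => norm_mul _ _)
    calc ‖∑ j, M i j * x j‖ ^ 2 ≤ (∑ j, ‖M i j‖ * ‖x j‖) ^ 2 :=
          pow_le_pow_left₀ (norm_nonneg _) h1 2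
      _ ≤ (∑ j, ‖M i j‖ ^ 2) * (∑ j, ‖x j‖ ^ 2) :=
          Finset.sum_mul_sq_le_sq_mul_sq _ _ _
  calc ‖Matrix.toEuclideanCLM (𝕜 := ℂ) M x‖
      = Real.sqrt (∑ i, ‖∑ j, M i j * x j‖ ^ 2) := by
        rw [EuclideanSpace.norm_eq]
        exact congrArg Real.sqrt (Finset.sum_congr rfl fun i _ => by rw [hx])
    _ ≤ Real.sqrt (∑ i, (∑ j, ‖M i j‖ ^ 2) * (∑ j, ‖x j‖ ^ 2)) :=
        Real.sqrt_le_sqrt (Finset.sum_le_sum fun i _ => key i)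
    _ = Real.sqrt ((∑ i, ∑ j, ‖M i j‖ ^ 2) * (∑ j, ‖x j‖ ^ 2)) := by rw [← Finset.sum_mul]
    _ = Real.sqrt (∑ i, ∑ j, ‖M i j‖ ^ 2) * Real.sqrt (∑ j, ‖x j‖ ^ 2) :=
        Real.sqrt_mul (Finset.sum_nonneg fun i _ => Finset.sum_nonneg fun j _ => sq_nonneg _) _
    _ = frobNorm M * ‖x‖ := by
        rw [frobNorm, EuclideanSpace.norm_eq]

lemma vandermonde_aux (n : ℕ) (z : Fin (n+1) → ℂ)
    (hzle : ∀ j, ‖z j‖ ≤ 1)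
    (Δ : ℝ) (hΔpos : 0 < Δ)
    (hΔ : ∀ j k, j ≠ k → Δ ≤ ‖z j - z k‖)
    (V : Matrix (Fin (n+1)) (Fin (n+1)) ℂ)
    (hV : ∀ j k, V j k = z j ^ (k.1)) :
    frobNorm V⁻¹ ≤ Real.sqrt ((n+1) * ((2 * n).choose n)) / Δ ^ n := by
  have hinj : Function.Injective z := by
    intro j k hjk
    by_contra hne
    have h := hΔ j k hne
    rw [hjk, sub_self, norm_zero] at h
    linarith
  set W : Matrix (Fin (n+1)) (Fin (n+1)) ℂ :=
    fun m k => (Lagrange.basis Finset.univ z k).coeff m.1 with hWdef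
  have hVW : V * W = 1 := by
    ext j k
    rw [Matrix.mul_apply, Matrix.one_apply]
    have hdeg : (Lagrange.basis Finset.univ z k).natDegree < n + 1 := by
      rw [Lagrange.natDegree_basis hinj.injOn (Finset.mem_univ k)]
      simp
    have heval := Polynomial.eval_eq_sum_range' hdeg (z j)
    have hs : ∑ m : Fin (n+1), V j m * W m k
        = ∑ m ∈ Finset.range (n+1), (Lagrange.basis Finset.univ z k).coeff m * z j ^ m := by
      rw [← Fin.sum_univ_eq_sum_range]
      exact Finset.sum_congr rfl fun m _ => by rw [hV]; ring
    rw [hs, ← heval]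
    by_cases hjk : j = k
    · subst hjk
      rw [Lagrange.eval_basis_self hinj.injOn (Finset.mem_univ j), if_pos rfl]
    · rw [Lagrange.eval_basis_of_ne (Ne.symm hjk) (Finset.mem_univ j), if_neg hjk]
  have hinv : V⁻¹ = W := Matrix.inv_eq_right_inv hVW
  have hentry : ∀ (m k : Fin (n+1)), ‖W m k‖ ≤ (n.choose m.1 : ℝ) / Δ ^ n := by
    intro m k
    have hks : (Finset.univ.erase k).card = n := by
      rw [Finset.card_erase_of_mem (Finset.mem_univ k)]
      simp
    have hm : (m : ℕ) ≤ n := Nat.lt_succ_iff.mp m.isLt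
    have hb : Lagrange.basis Finset.univ z k
        = Polynomial.C (Lagrange.nodalWeight Finset.univ z k)
          * Lagrange.nodal (Finset.univ.erase k) z := by
      rw [Lagrange.basis_eq_prod_sub_inv_mul_nodal_div (Finset.mem_univ k),
        ← Lagrange.nodal_erase_eq_nodal_div (Finset.mem_univ k)]
    have hw : ‖Lagrange.nodalWeight Finset.univ z k‖ ≤ (Δ ^ n)⁻¹ := by
      rw [Lagrange.nodalWeight, norm_prod]
      calc ∏ j ∈ Finset.univ.erase k, ‖(z k - z j)⁻¹‖
          ≤ ∏ j ∈ Finset.univ.erase k, Δ⁻¹ := by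
            refine Finset.prod_le_prod (fun j _ => norm_nonneg _) fun j hj => ?_
            rw [norm_inv]
            exact inv_anti₀ hΔpos (hΔ k j fun h => (Finset.mem_erase.mp hj).1 h.symm)
        _ = (Δ ^ n)⁻¹ := by rw [Finset.prod_const, hks, inv_pow]
    have hcoeff : ‖(Lagrange.nodal (Finset.univ.erase k) z).coeff m.1‖
        ≤ (n.choose m.1 : ℝ) := by
      have hrw : Lagrange.nodal (Finset.univ.erase k) z
          = (((Finset.univ.erase k).val.map z).map (fun a => Polynomial.X - Polynomial.C a)).prod := by
        rw [Lagrange.nodal_eq, Finset.prod_eq_multiset_prod, Multiset.map_map]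
        rfl
      have hcard : Multiset.card ((Finset.univ.erase k).val.map z) = n := by
        rw [Multiset.card_map]
        exact hks
      have hcm := Multiset.prod_X_sub_C_coeff ((Finset.univ.erase k).val.map z)
        (k := m.1) (by rw [hcard]; exact hm)
      rw [hrw, hcm, hcard, norm_mul, norm_pow, norm_neg, norm_one, one_pow, one_mul,
        Finset.esymm_map_val]
      calc ‖∑ t ∈ (Finset.univ.erase k).powersetCard (n - m.1), ∏ i ∈ t, z i‖
          ≤ ∑ t ∈ (Finset.univ.erase k).powersetCard (n - m.1), ‖∏ i ∈ t, z i‖ :=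
            norm_sum_le _ _
        _ ≤ ∑ t ∈ (Finset.univ.erase k).powersetCard (n - m.1), 1 :=
            Finset.sum_le_sum fun t _ => by
              rw [norm_prod]
              exact Finset.prod_le_one (fun i _ => norm_nonneg _) fun i _ => hzle i
        _ = (((Finset.univ.erase k).powersetCard (n - m.1)).card : ℝ) := by simp
        _ = (n.choose m.1 : ℝ) := by
            rw [Finset.card_powersetCard, hks, Nat.choose_symm hm]
    show ‖(Lagrange.basis Finset.univ z k).coeff m.1‖ ≤ _
    rw [hb, Polynomial.coeff_C_mul, norm_mul, div_eq_inv_mul]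
    exact mul_le_mul hw hcoeff (norm_nonneg _) (by positivity)
  have hΔn : (0:ℝ) < Δ ^ n := by positivity
  have hsum : ∑ j, ∑ k, ‖V⁻¹ j k‖ ^ 2
      ≤ ((n+1) * ((2 * n).choose n) : ℝ) / (Δ ^ n) ^ 2 := by
    rw [hinv]
    calc ∑ j, ∑ k, ‖W j k‖ ^ 2
        ≤ ∑ j : Fin (n+1), ∑ _k : Fin (n+1), ((n.choose j.1 : ℝ) / Δ ^ n) ^ 2 :=
          Finset.sum_le_sum fun j _ => Finset.sum_le_sum fun k _ =>
            pow_le_pow_left₀ (norm_nonneg _) (hentry j k) 2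
      _ = (n+1 : ℝ) * ∑ j : Fin (n+1), ((n.choose j.1 : ℝ)) ^ 2 / (Δ ^ n) ^ 2 := by
          simp only [Finset.sum_const, Finset.card_univ, Fintype.card_fin, nsmul_eq_mul,
            div_pow, ← Finset.mul_sum]
          push_cast
          ring
      _ = ((n+1) * ((2 * n).choose n) : ℝ) / (Δ ^ n) ^ 2 := by
          rw [← Finset.sum_div, Fin.sum_univ_eq_sum_range (fun i => ((n.choose i : ℝ)) ^ 2),
            sum_choose_sq_real, mul_div_assoc]
  calc frobNorm V⁻¹ ≤ Real.sqrt (((n+1) * ((2 * n).choose n) : ℝ) / (Δ ^ n) ^ 2) :=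
        Real.sqrt_le_sqrt hsum
    _ = Real.sqrt ((n+1) * ((2 * n).choose n)) / Δ ^ n := by
        rw [Real.sqrt_div (by positivity), Real.sqrt_sq hΔn.le]

theorem vandermonde_inverse_norm_bound (r : ℕ) (z : Fin r → ℂ)
    (hzle : ∀ j, ‖z j‖ ≤ 1)
    (Δ : ℝ) (hΔpos : 0 < Δ)
    (hΔ : ∀ j k, j ≠ k → Δ ≤ ‖z j - z k‖)
    (V : Matrix (Fin r) (Fin r) ℂ)
    (hV : ∀ j k, V j k = z j ^ (k.1)) :
    frobNorm V⁻¹ ≤ Real.sqrt (r * ((2 * (r - 1)).choose (r - 1))) / Δ ^ (r - 1) ∧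
    opNorm V⁻¹ ≤ Real.sqrt (r * ((2 * (r - 1)).choose (r - 1))) / Δ ^ (r - 1) := by
  suffices hF : frobNorm V⁻¹ ≤ Real.sqrt (r * ((2 * (r - 1)).choose (r - 1))) / Δ ^ (r - 1) from
    ⟨hF, (opNorm_le_frobNorm _).trans hF⟩
  cases r with
  | zero =>
    have h0 : frobNorm V⁻¹ = 0 := by simp [frobNorm]
    rw [h0]
    positivity
  | succ n =>
    have h := vandermonde_aux n z hzle Δ hΔpos hΔ V hV
    simp only [Nat.add_sub_cancel]
    convert h using 3
    push_cast
    ring
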